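/- Let F be a measurable mapping from a σ-finite measure space Ω into nonempty closed convex symmetric subsets of F^n. Then the following are equivalent: (i) the set of measurable selections of F is bounded in L^1(Ω;F^n); (ii) F is integrably bounded, i.e., there is 0 ≤ k ∈ L^1(Ω) with F(x) ⊆ {k(x)u : |u| ≤ 1} a.e.; (iii) the function h(x) := sup_{u ∈ F(x)} |u| lies in L^1(Ω). Moreover the supremum of L^1 norms of selections equals ‖h‖_{L^1}. -/

import Mathlib

open MeasureTheory ENNReal

/-- A subset of an `𝕜`-vector space is *symmetric* if it is closed under multiplication by
unimodular scalars. -/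
def SymmSet (𝕜 : Type*) [RCLike 𝕜] {E : Type*} [SMul 𝕜 E] (K : Set E) : Prop :=
  ∀ c : 𝕜, ‖c‖ = 1 → ∀ x ∈ K, c • x ∈ K

/-- The set `S⁰(Ω;F)` of measurable selections of a set-valued map `F`. -/
def SelSet {𝕜 : Type*} [RCLike 𝕜] {n : ℕ}
    [MeasurableSpace (EuclideanSpace 𝕜 (Fin n))]
    {Ω : Type*} [MeasurableSpace Ω] (μ : Measure Ω)
    (F : Ω → Set (EuclideanSpace 𝕜 (Fin n))) : Set (Ω → EuclideanSpace 𝕜 (Fin n)) :=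
  {f | Measurable f ∧ ∀ᵐ x ∂μ, f x ∈ F x}

section Aux

variable {𝕜 : Type*} [RCLike 𝕜] {n : ℕ}
    [MeasurableSpace (EuclideanSpace 𝕜 (Fin n))] [BorelSpace (EuclideanSpace 𝕜 (Fin n))]
    {Ω : Type*} [MeasurableSpace Ω]
    {F : Ω → Set (EuclideanSpace 𝕜 (Fin n))}

/-- Strong convexity estimate in a Hilbert space: two points of a convex set that are both
close to minimizing the distance to `q` are close to each other. -/
private lemma strongConv {K : Set (EuclideanSpace 𝕜 (Fin n))} (hK : Convex ℝ K)
    (q u v : EuclideanSpace 𝕜 (Fin n)) (hu : u ∈ K) (hv : v ∈ K) :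
    dist u v ^ 2 ≤ 2 * dist q u ^ 2 + 2 * dist q v ^ 2 - 4 * Metric.infDist q K ^ 2 := by
  set m := midpoint ℝ u v with hm
  have hmK : m ∈ K := hK.segment_subset hu hv (midpoint_mem_segment u v)
  have h1 : Metric.infDist q K ≤ dist q m := Metric.infDist_le_dist_of_mem hmK
  have h0 : (0:ℝ) ≤ Metric.infDist q K := Metric.infDist_nonneg
  have hp := parallelogram_law_with_norm 𝕜 (q - u) (q - v)
  have e1 : (q - u) + (q - v) = (q - m) + (q - m) := by
    rw [sub_add_sub_comm, sub_add_sub_comm, hm, midpoint_add_self]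
  have e2 : ‖(q - m) + (q - m)‖ = 2 * ‖q - m‖ := by
    rw [← two_smul ℝ, norm_smul]; simp
  have e3 : (q - u) - (q - v) = v - u := by abel
  rw [e1, e2, e3] at hp
  have d1 : dist q u = ‖q - u‖ := dist_eq_norm q u
  have d2 : dist q v = ‖q - v‖ := dist_eq_norm q v
  have d3 : dist u v = ‖v - u‖ := by rw [dist_eq_norm, norm_sub_rev]
  have d4 : dist q m = ‖q - m‖ := dist_eq_norm q m
  have h6 : Metric.infDist q K ^ 2 ≤ ‖q - m‖ ^ 2 := by
    rw [← d4]; exact pow_le_pow_left₀ h0 h1 2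
  rw [d1, d2, d3]
  nlinarith [h6, hp]

private lemma measInfDist
    (hFmeas : ∀ E : Set (EuclideanSpace 𝕜 (Fin n)), MeasurableSet E →
      MeasurableSet {x | (F x ∩ E).Nonempty})
    (hne : ∀ x, (F x).Nonempty) (q : EuclideanSpace 𝕜 (Fin n)) :
    Measurable fun x => Metric.infDist q (F x) := by
  apply measurable_of_Iio
  intro r
  convert hFmeas (Metric.ball q r) Metric.isOpen_ball.measurableSet using 1
  ext x
  simp only [Set.mem_preimage, Set.mem_Iio, Set.mem_setOf_eq]
  rw [Metric.infDist_lt_iff (hne x)]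
  constructor
  · rintro ⟨y, hy, hd⟩
    exact ⟨y, hy, by simpa [Metric.mem_ball, dist_comm] using hd⟩
  · rintro ⟨y, hy, hd⟩
    exact ⟨y, hy, by simpa [Metric.mem_ball, dist_comm] using hd⟩

private lemma measH
    (hFmeas : ∀ E : Set (EuclideanSpace 𝕜 (Fin n)), MeasurableSet E →
      MeasurableSet {x | (F x ∩ E).Nonempty}) :
    Measurable fun x => ⨆ v ∈ F x, (‖v‖₊ : ℝ≥0∞) := by
  apply measurable_of_Ioi
  intro r
  have hE : MeasurableSet {v : EuclideanSpace 𝕜 (Fin n) | r < (‖v‖₊ : ℝ≥0∞)} :=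
    measurableSet_lt measurable_const measurable_nnnorm.coe_nnreal_ennreal
  convert hFmeas _ hE using 1
  ext x
  simp only [Set.mem_preimage, Set.mem_Ioi, Set.mem_setOf_eq, lt_iSup_iff, Set.Nonempty,
    Set.mem_inter_iff]
  tauto

/-- The metric projection onto the closed convex values of `F` is measurable. -/
private lemma projMeasurable
    (hFmeas : ∀ E : Set (EuclideanSpace 𝕜 (Fin n)), MeasurableSet E →
      MeasurableSet {x | (F x ∩ E).Nonempty})
    (hne : ∀ x, (F x).Nonempty) (hconv : ∀ x, Convex ℝ (F x))
    (q : EuclideanSpace 𝕜 (Fin n)) (P : Ω → EuclideanSpace 𝕜 (Fin n))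
    (hPmem : ∀ x, P x ∈ F x)
    (hPdist : ∀ x, Metric.infDist q (F x) = dist q (P x)) :
    Measurable P := by
  classical
  set e := TopologicalSpace.denseSeq (EuclideanSpace 𝕜 (Fin n)) with he'
  have he : DenseRange e := TopologicalSpace.denseRange_denseSeq _
  set d : Ω → ℝ := fun x => Metric.infDist q (F x) with hd
  have hdm : Measurable d := measInfDist hFmeas hne q
  have hex : ∀ m : ℕ, ∀ x : Ω, ∃ j : ℕ,
      Metric.infDist (e j) (F x) < 1/((m:ℝ)+1) ∧ dist q (e j) < d x + 1/((m:ℝ)+1) := by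
    intro m x
    have hpos : (0:ℝ) < 1/((m:ℝ)+1)/2 := by positivity
    obtain ⟨v, hvF, hvd⟩ := (Metric.infDist_lt_iff (hne x)).1
      (show Metric.infDist q (F x) < d x + 1/((m:ℝ)+1)/2 from lt_add_of_pos_right _ hpos)
    obtain ⟨j, hj⟩ := he.exists_dist_lt v hpos
    refine ⟨j, ?_, ?_⟩
    · have h2 : Metric.infDist (e j) (F x) ≤ dist (e j) v :=
        Metric.infDist_le_dist_of_mem hvF
      rw [dist_comm] at h2
      calc Metric.infDist (e j) (F x) ≤ dist v (e j) := h2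
        _ < 1/((m:ℝ)+1) := by linarith
    · calc dist q (e j) ≤ dist q v + dist v (e j) := dist_triangle _ _ _
        _ < d x + 1/((m:ℝ)+1) := by linarith
  set g : ℕ → Ω → EuclideanSpace 𝕜 (Fin n) :=
    fun m x => e (Nat.find (hex m x)) with hg
  have hgm : ∀ m, Measurable (g m) := by
    intro m
    apply Measurable.find (f := fun j (_ : Ω) => e j) (fun j => measurable_const) ?_ (hex m)
    intro j
    have : {x | Metric.infDist (e j) (F x) < 1/((m:ℝ)+1) ∧ dist q (e j) < d x + 1/((m:ℝ)+1)}
        = {x | Metric.infDist (e j) (F x) < 1/((m:ℝ)+1)}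
          ∩ {x | dist q (e j) < d x + 1/((m:ℝ)+1)} := rfl
    rw [this]
    exact (measurableSet_lt (measInfDist hFmeas hne (e j)) measurable_const).inter
      (measurableSet_lt measurable_const (hdm.add_const _))
  have hconvg : ∀ x, Filter.Tendsto (fun m => g m x) Filter.atTop (nhds (P x)) := by
    intro x
    rw [tendsto_iff_dist_tendsto_zero]
    have key : ∀ m : ℕ, dist (g m x) (P x)
        ≤ 1/((m:ℝ)+1) + Real.sqrt (2*(d x + 2*(1/((m:ℝ)+1)))^2 - 2*(d x)^2) := by
      intro m
      obtain ⟨h1, h2⟩ := Nat.find_spec (hex m x)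
      obtain ⟨u, huF, hud⟩ := (Metric.infDist_lt_iff (hne x)).1 h1
      have hgxu : dist (g m x) u < 1/((m:ℝ)+1) := hud
      have hqu : dist q u < d x + 2*(1/((m:ℝ)+1)) := by
        calc dist q u ≤ dist q (g m x) + dist (g m x) u := dist_triangle _ _ _
          _ < d x + 2*(1/((m:ℝ)+1)) := by
            have := h2; simp only [hg] at this ⊢; linarith
      have hsc := strongConv (hconv x) q u (P x) huF (hPmem x)
      have hdx : dist q (P x) = d x := (hPdist x).symm
      have h0 : 0 ≤ d x := Metric.infDist_nonneg
      have hdinf : Metric.infDist q (F x) = d x := rfl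
      rw [hdx, hdinf] at hsc
      have hsq : dist u (P x)^2 ≤ 2*(d x + 2*(1/((m:ℝ)+1)))^2 - 2*(d x)^2 := by
        nlinarith [dist_nonneg (x := q) (y := u)]
      have hle : dist u (P x) ≤ Real.sqrt (2*(d x + 2*(1/((m:ℝ)+1)))^2 - 2*(d x)^2) := by
        calc dist u (P x) = Real.sqrt (dist u (P x)^2) := (Real.sqrt_sq dist_nonneg).symm
          _ ≤ _ := Real.sqrt_le_sqrt hsq
      calc dist (g m x) (P x) ≤ dist (g m x) u + dist u (P x) := dist_triangle _ _ _
        _ ≤ 1/((m:ℝ)+1) + Real.sqrt (2*(d x + 2*(1/((m:ℝ)+1)))^2 - 2*(d x)^2) := by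
          linarith
    have h1 : Filter.Tendsto (fun m : ℕ => 1/((m:ℝ)+1)) Filter.atTop (nhds 0) :=
      tendsto_one_div_add_atTop_nhds_zero_nat
    have h2 : Filter.Tendsto (fun m : ℕ => 2*(d x + 2*(1/((m:ℝ)+1)))^2 - 2*(d x)^2)
        Filter.atTop (nhds 0) := by
      have h3 := (((h1.const_mul 2).const_add (d x)).pow 2).const_mul 2
      have h4 := h3.sub_const (2*(d x)^2)
      simpa using h4
    have h5 : Filter.Tendsto
        (fun m : ℕ => Real.sqrt (2*(d x + 2*(1/((m:ℝ)+1)))^2 - 2*(d x)^2))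
        Filter.atTop (nhds 0) := by
      have := (Real.continuous_sqrt.tendsto 0).comp h2
      simpa [Function.comp_def] using this
    exact squeeze_zero (fun m => dist_nonneg) key (by simpa using h1.add h5)
  exact measurable_of_tendsto_metrizable hgm (tendsto_pi_nhds.2 hconvg)

end Aux

/-- For a measurable map `F` from a σ-finite measure space into nonempty
closed convex symmetric subsets of `𝔽ⁿ`, the following are equivalent:
(i) the measurable selections of `F` form a bounded subset of `L¹(Ω;𝔽ⁿ)`;
(ii) `F` is integrably bounded: there is `0 ≤ k ∈ L¹(Ω)` with `F x ⊆ {v : ‖v‖ ≤ k x}` a.e.;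
(iii) `h(x) := sup_{v ∈ F x} ‖v‖` lies in `L¹(Ω)`.
Moreover, in this case the supremum of the `L¹`-norms of the selections equals `‖h‖_{L¹}`. -/
theorem stmt4 {𝕜 : Type*} [RCLike 𝕜] {n : ℕ}
    [MeasurableSpace (EuclideanSpace 𝕜 (Fin n))] [BorelSpace (EuclideanSpace 𝕜 (Fin n))]
    {Ω : Type*} [MeasurableSpace Ω] (μ : Measure Ω) [SigmaFinite μ]
    (F : Ω → Set (EuclideanSpace 𝕜 (Fin n)))
    (hFmeas : ∀ E : Set (EuclideanSpace 𝕜 (Fin n)), MeasurableSet E →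
      MeasurableSet {x | (F x ∩ E).Nonempty})
    (hne : ∀ x, (F x).Nonempty) (hcl : ∀ x, IsClosed (F x))
    (hconv : ∀ x, Convex ℝ (F x)) (hsymm : ∀ x, SymmSet 𝕜 (F x)) :
    ((⨆ f ∈ SelSet μ F, ∫⁻ x, ‖f x‖₊ ∂μ) ≠ ⊤ ↔
      ∃ k : Ω → ℝ, Integrable k μ ∧ (∀ᵐ x ∂μ, 0 ≤ k x) ∧
        ∀ᵐ x ∂μ, ∀ v ∈ F x, ‖v‖ ≤ k x) ∧
    ((⨆ f ∈ SelSet μ F, ∫⁻ x, ‖f x‖₊ ∂μ) ≠ ⊤ ↔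
      (∫⁻ x, (⨆ v ∈ F x, (‖v‖₊ : ℝ≥0∞)) ∂μ) ≠ ⊤) ∧
    ((⨆ f ∈ SelSet μ F, ∫⁻ x, ‖f x‖₊ ∂μ) ≠ ⊤ →
      (⨆ f ∈ SelSet μ F, ∫⁻ x, ‖f x‖₊ ∂μ) = ∫⁻ x, (⨆ v ∈ F x, (‖v‖₊ : ℝ≥0∞)) ∂μ) := by
  classical
  have hmeas : Measurable fun x : Ω => ⨆ v ∈ F x, (‖v‖₊ : ℝ≥0∞) := measH hFmeas
  -- The key identity: the sup of the integrals of selections equals the integral of h.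
  have key : (⨆ f ∈ SelSet μ F, ∫⁻ x, ‖f x‖₊ ∂μ)
      = ∫⁻ x, (⨆ v ∈ F x, (‖v‖₊ : ℝ≥0∞)) ∂μ := by
    apply le_antisymm
    · refine iSup₂_le fun f hf => ?_
      refine lintegral_mono_ae (hf.2.mono fun x hx => ?_)
      exact le_iSup₂ (f := fun v (_ : v ∈ F x) => (‖v‖₊ : ℝ≥0∞)) (f x) hx
    · -- construct selections via metric projections onto F x
      have hproj : ∀ (q : EuclideanSpace 𝕜 (Fin n)) (x : Ω),
          ∃ v ∈ F x, Metric.infDist q (F x) = dist q v := fun q x =>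
        (hcl x).exists_infDist_eq_dist (hne x) q
      choose P hPmem hPdist using hproj
      have hPm : ∀ q, Measurable (P q) := fun q =>
        projMeasurable hFmeas hne hconv q (P q) (fun x => hPmem q x) (fun x => hPdist q x)
      set e := TopologicalSpace.denseSeq (EuclideanSpace 𝕜 (Fin n)) with he'
      have he : DenseRange e := TopologicalSpace.denseRange_denseSeq _
      -- an index maximizing the norm among the first N+1 candidate selections
      have hexmax : ∀ (N : ℕ) (x : Ω), ∃ j : ℕ,
          j ≤ N ∧ ∀ i ≤ N, ‖P (e i) x‖ ≤ ‖P (e j) x‖ := by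
        intro N x
        obtain ⟨b, hb, hmax⟩ := Finset.exists_max_image (Finset.range (N+1))
          (fun j => ‖P (e j) x‖) ⟨0, by simp⟩
        exact ⟨b, Nat.lt_succ_iff.1 (Finset.mem_range.1 hb),
          fun i hi => hmax i (Finset.mem_range.2 (Nat.lt_succ_of_le hi))⟩
      set G : ℕ → Ω → EuclideanSpace 𝕜 (Fin n) :=
        fun N x => P (e (Nat.find (hexmax N x))) x with hG
      have hGmem : ∀ N x, G N x ∈ F x := fun N x => hPmem _ x
      have hGmeas : ∀ N, Measurable (G N) := by
        intro N
        apply Measurable.find (f := fun j => P (e j)) (fun j => hPm (e j)) ?_ (hexmax N)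
        intro j
        by_cases hj : j ≤ N
        · have : {x : Ω | j ≤ N ∧ ∀ i ≤ N, ‖P (e i) x‖ ≤ ‖P (e j) x‖}
              = ⋂ i, {x : Ω | i ≤ N → ‖P (e i) x‖ ≤ ‖P (e j) x‖} := by
            ext x; simp [hj]
          rw [this]
          apply MeasurableSet.iInter
          intro i
          by_cases hi : i ≤ N
          · simpa [hi] using measurableSet_le ((hPm (e i)).norm) ((hPm (e j)).norm)
          · simp [hi]
        · simp [hj]
      have hGspec : ∀ N x, ∀ i ≤ N, ‖P (e i) x‖ ≤ ‖G N x‖ :=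
        fun N x => (Nat.find_spec (hexmax N x)).2
      have hGmono : ∀ N x, ‖G N x‖ ≤ ‖G (N+1) x‖ := by
        intro N x
        exact hGspec (N+1) x _ ((Nat.find_spec (hexmax N x)).1.trans (Nat.le_succ N))
      -- pointwise identity
      have hptw : ∀ x, (⨆ v ∈ F x, (‖v‖₊ : ℝ≥0∞)) = ⨆ N, (‖G N x‖₊ : ℝ≥0∞) := by
        intro x
        apply le_antisymm
        · refine iSup₂_le fun v hv => ?_
          refine ENNReal.le_of_forall_pos_le_add fun ε hε _ => ?_
          have hε2 : (0:ℝ) < (ε:ℝ)/2 := by positivity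
          obtain ⟨j, hj⟩ := he.exists_dist_lt v hε2
          -- hj : dist v (e j) < ε/2
          have e1 : dist (e j) v < (ε:ℝ)/2 := by rw [dist_comm]; exact hj
          have e2 : dist (P (e j) x) (e j) ≤ dist (e j) v := by
            rw [dist_comm, ← hPdist (e j) x]
            exact Metric.infDist_le_dist_of_mem hv
          have e3 : dist (P (e j) x) v < (ε:ℝ) := by
            calc dist (P (e j) x) v ≤ dist (P (e j) x) (e j) + dist (e j) v :=
              dist_triangle _ _ _
              _ < (ε:ℝ) := by linarith
          have e4 : ‖v‖ ≤ ‖P (e j) x‖ + (ε:ℝ) := by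
            have h4 := norm_sub_norm_le v (P (e j) x)
            rw [dist_eq_norm, norm_sub_rev] at e3
            linarith
          have e5 : ‖v‖ ≤ ‖G j x‖ + (ε:ℝ) := by
            have := hGspec j x j le_rfl
            linarith
          have hnn : (‖v‖₊ : ℝ≥0∞) ≤ (‖G j x‖₊ : ℝ≥0∞) + (ε : ℝ≥0∞) := by
            rw [← ENNReal.coe_add, ENNReal.coe_le_coe, ← NNReal.coe_le_coe]
            push_cast
            simpa using e5
          exact hnn.trans (add_le_add (le_iSup (fun N => (‖G N x‖₊ : ℝ≥0∞)) j) le_rfl)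
        · exact iSup_le fun N =>
            le_iSup₂ (f := fun v (_ : v ∈ F x) => (‖v‖₊ : ℝ≥0∞)) (G N x) (hGmem N x)
      have hmono : Monotone fun N : ℕ => fun x => (‖G N x‖₊ : ℝ≥0∞) := by
        apply monotone_nat_of_le_succ
        intro N x
        simp only [ENNReal.coe_le_coe, ← NNReal.coe_le_coe, coe_nnnorm]
        exact hGmono N x
      calc ∫⁻ x, (⨆ v ∈ F x, (‖v‖₊ : ℝ≥0∞)) ∂μ
          = ∫⁻ x, ⨆ N, (‖G N x‖₊ : ℝ≥0∞) ∂μ := lintegral_congr fun x => hptw x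
        _ = ⨆ N, ∫⁻ x, (‖G N x‖₊ : ℝ≥0∞) ∂μ :=
            lintegral_iSup (fun N => (hGmeas N).nnnorm.coe_nnreal_ennreal) hmono
        _ ≤ ⨆ f ∈ SelSet μ F, ∫⁻ x, ‖f x‖₊ ∂μ := iSup_le fun N =>
            le_iSup₂ (f := fun f (_ : f ∈ SelSet μ F) => ∫⁻ x, ‖f x‖₊ ∂μ) (G N)
              ⟨hGmeas N, Filter.Eventually.of_forall (hGmem N)⟩
  refine ⟨?_, by rw [key], fun _ => key⟩
  constructor
  · intro hS
    rw [key] at hS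
    refine ⟨fun x => (⨆ v ∈ F x, (‖v‖₊ : ℝ≥0∞)).toReal,
      integrable_toReal_of_lintegral_ne_top hmeas.aemeasurable hS,
      Filter.Eventually.of_forall fun x => ENNReal.toReal_nonneg, ?_⟩
    filter_upwards [ae_lt_top hmeas hS] with x hx
    intro v hv
    have h1 : (‖v‖₊ : ℝ≥0∞) ≤ ⨆ v ∈ F x, (‖v‖₊ : ℝ≥0∞) :=
      le_iSup₂ (f := fun v (_ : v ∈ F x) => (‖v‖₊ : ℝ≥0∞)) v hv
    have h2 := ENNReal.toReal_mono hx.ne h1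
    simpa using h2
  · rintro ⟨k, hki, hk0, hkb⟩
    rw [key]
    have hle : ∫⁻ x, (⨆ v ∈ F x, (‖v‖₊ : ℝ≥0∞)) ∂μ ≤ ∫⁻ x, ENNReal.ofReal (k x) ∂μ := by
      refine lintegral_mono_ae ?_
      filter_upwards [hkb] with x hx
      refine iSup₂_le fun v hv => ?_
      rw [← ENNReal.ofReal_coe_nnreal, coe_nnnorm]
      exact ENNReal.ofReal_le_ofReal (hx v hv)
    exact (lt_of_le_of_lt hle hki.lintegral_lt_top).ne
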